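/- Let G be a claw-free graph with a proper coloring c using at most Δ(G)+6 colors, and let v be a vertex such that no vertex in the closed neighborhood N[v] is c-critical. Then every neighbor w of v with |W(c,w)| ≤ 4 has a c-safe color, i.e., there exists a color i not appearing on N[w] such that no neighbor x of w satisfies W(c,x) = {c(w), i}. -/

import Mathlib

/-- The number of neighbors of `v` colored `t`. -/
noncomputable def nbrColorCount {V : Type*} {α : Type*} (G : SimpleGraph V) (c : V → α) (v : V) (t : α) : ℕ :=
  Nat.card {x // G.Adj v x ∧ c x = t}

/-- The set of witnesses of `v`: colors appearing an odd number of times among neighbors of `v`. -/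
def witnessSet {V : Type*} {α : Type*} (G : SimpleGraph V) (c : V → α) (v : V) : Set α :=
  {t | Odd (nbrColorCount G c v t)}

/-- A proper coloring. -/
def properColoring {V : Type*} {α : Type*} (G : SimpleGraph V) (c : V → α) : Prop :=
  ∀ ⦃u v⦄, G.Adj u v → c u ≠ c v

/-- A graph is claw-free: no induced `K_{1,3}`. -/
def ClawFree {V : Type*} (G : SimpleGraph V) : Prop :=
  ∀ v a b d, G.Adj v a → G.Adj v b → G.Adj v d → a ≠ b → a ≠ d → b ≠ d →
    G.Adj a b ∨ G.Adj a d ∨ G.Adj b d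

/-- A vertex `w` is `c`-critical. -/
def isCritical {V : Type*} {α : Type*} (G : SimpleGraph V) (c : V → α) (w : V) : Prop :=
  ∃ w1 w2, G.Adj w w1 ∧ G.Adj w w2 ∧ ¬ G.Adj w1 w2 ∧ c w1 ≠ c w2 ∧
    witnessSet G c w = {c w1, c w2}

/-- A color `i` is `c`-safe for `w`: it does not appear on the closed neighborhood
of `w` and no neighbor `x` of `w` has witness set `{c w, i}`. -/
def isSafe {V : Type*} {α : Type*} (G : SimpleGraph V) (c : V → α) (w : V) (i : α) : Prop :=
  i ≠ c w ∧ (∀ x, G.Adj w x → c x ≠ i) ∧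
    (∀ x, G.Adj w x → witnessSet G c x ≠ {c w, i})

lemma nbrColorCount_eq_card {V : Type*} {α : Type*} [Fintype V] [DecidableEq α]
    (G : SimpleGraph V) [DecidableRel G.Adj] (c : V → α) (u : V) (t : α) :
    nbrColorCount G c u t = ((G.neighborFinset u).filter (fun x => c x = t)).card := by
  classical
  rw [nbrColorCount, Nat.card_eq_fintype_card, Fintype.card_subtype]
  congr 1
  ext x
  simp [SimpleGraph.mem_neighborFinset]

theorem stmt_19' {V : Type*} [Fintype V] [DecidableEq V] (G : SimpleGraph V)
    [DecidableRel G.Adj] (hclaw : ClawFree G)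
    (c : V → Fin (G.maxDegree + 6)) (hc : properColoring G c)
    (v : V) (hv : ∀ x, (x = v ∨ G.Adj v x) → ¬ isCritical G c x)
    (w : V) (hw : G.Adj v w) (hWsmall : (witnessSet G c w).ncard ≤ 4) :
    ∃ i : Fin (G.maxDegree + 6), isSafe G c w i := by
  classical
  set N : Finset V := G.neighborFinset w with hN
  set I : Finset (Fin (G.maxDegree + 6)) := N.image c with hI
  set A : Finset (Fin (G.maxDegree + 6)) := insert (c w) I with hA
  set m : Fin (G.maxDegree + 6) → ℕ := fun t => (N.filter (fun x => c x = t)).card with hm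
  -- Step 1: 2 * I.card ≤ G.degree w + 4
  have hWf : (I.filter (fun t => Odd (m t))).card ≤ 4 := by
    have hsub : (↑(I.filter (fun t => Odd (m t))) : Set (Fin (G.maxDegree + 6))) ⊆
        witnessSet G c w := by
      intro t ht
      simp only [Finset.coe_filter, Set.mem_setOf_eq] at ht
      show Odd (nbrColorCount G c w t)
      rw [nbrColorCount_eq_card]
      exact ht.2
    calc (I.filter (fun t => Odd (m t))).card
        = (↑(I.filter (fun t => Odd (m t))) : Set (Fin (G.maxDegree + 6))).ncard := by
          rw [Set.ncard_coe_finset]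
      _ ≤ (witnessSet G c w).ncard := Set.ncard_le_ncard hsub (Set.toFinite _)
      _ ≤ 4 := hWsmall
  have hdeg : ∑ t ∈ I, m t = G.degree w := by
    rw [SimpleGraph.degree, ← hN]
    exact (Finset.card_eq_sum_card_image c N).symm
  have h2k : 2 * I.card ≤ G.degree w + 4 := by
    have hpt : ∀ t ∈ I, 2 ≤ m t + (if Odd (m t) then 1 else 0) := by
      intro t ht
      have hpos : 0 < m t := by
        rw [hI] at ht
        obtain ⟨x, hx, hxe⟩ := Finset.mem_image.mp ht
        exact Finset.card_pos.mpr ⟨x, Finset.mem_filter.mpr ⟨hx, hxe⟩⟩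
      by_cases hodd : Odd (m t)
      · simp only [hodd, if_true]; omega
      · simp only [hodd, if_false]
        rw [Nat.not_odd_iff_even] at hodd
        obtain ⟨r, hr⟩ := hodd
        omega
    have : 2 * I.card = ∑ t ∈ I, 2 := by
      rw [Finset.sum_const, smul_eq_mul, mul_comm]
    rw [this]
    calc ∑ t ∈ I, 2 ≤ ∑ t ∈ I, (m t + (if Odd (m t) then 1 else 0)) :=
          Finset.sum_le_sum hpt
      _ = (∑ t ∈ I, m t) + (I.filter (fun t => Odd (m t))).card := by
          rw [Finset.sum_add_distrib, Finset.card_filter]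
      _ ≤ G.degree w + 4 := by rw [hdeg]; exact Nat.add_le_add_left hWf _
  -- Key lemma: witnesses of bad colors outside A are outside N[v]
  have key : ∀ i : Fin (G.maxDegree + 6), i ∉ A → ∀ x, G.Adj w x →
      witnessSet G c x = {c w, i} → x ≠ v ∧ ¬ G.Adj v x := by
    intro i hiA x hwx hWx
    have hine : i ≠ c w := by
      intro h; exact hiA (h ▸ Finset.mem_insert_self _ _)
    have hiI : i ∉ I := fun h => hiA (Finset.mem_insert_of_mem h)
    have hcrit : isCritical G c x := by
      have hiodd : Odd (nbrColorCount G c x i) := by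
        have : i ∈ witnessSet G c x := by rw [hWx]; exact Or.inr rfl
        exact this
      rw [nbrColorCount_eq_card] at hiodd
      obtain ⟨b, hb⟩ := Finset.card_pos.mp hiodd.pos
      rw [Finset.mem_filter, SimpleGraph.mem_neighborFinset] at hb
      refine ⟨w, b, hwx.symm, hb.1, ?_, ?_, ?_⟩
      · intro hadj
        exact hiI (Finset.mem_image.mpr ⟨b, by
          rw [hN, SimpleGraph.mem_neighborFinset]; exact hadj, hb.2⟩)
      · rw [hb.2]; exact hine.symm
      · rw [hb.2]; exact hWx
    constructor
    · intro h; exact hv x (Or.inl h) hcrit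
    · intro h; exact hv x (Or.inr h) hcrit
  -- The bad-color finset
  set Bad : Finset (Fin (G.maxDegree + 6)) :=
    Finset.univ.filter (fun i => i = c w ∨ (∃ x ∈ N, c x = i) ∨
      ∃ x, G.Adj w x ∧ witnessSet G c x = {c w, i}) with hBad
  set Bset : Finset (Fin (G.maxDegree + 6)) :=
    Finset.univ.filter (fun i => i ∉ A ∧ ∃ x, G.Adj w x ∧ witnessSet G c x = {c w, i})
    with hBset
  have hBsub : Bad ⊆ A ∪ Bset := by
    intro i hi
    rw [hBad, Finset.mem_filter] at hi
    rcases hi.2 with h | ⟨x, hx, hxe⟩ | hwit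
    · exact Finset.mem_union_left _ (h ▸ Finset.mem_insert_self _ _)
    · exact Finset.mem_union_left _
        (Finset.mem_insert_of_mem (Finset.mem_image.mpr ⟨x, hx, hxe⟩))
    · by_cases hA' : i ∈ A
      · exact Finset.mem_union_left _ hA'
      · exact Finset.mem_union_right _
          (Finset.mem_filter.mpr ⟨Finset.mem_univ _, hA', hwit⟩)
  -- Injection from Bset into I
  have hBcard : Bset.card ≤ I.card := by
    set xf : Fin (G.maxDegree + 6) → V := fun i =>
      if h : ∃ x, G.Adj w x ∧ witnessSet G c x = {c w, i} then h.choose else w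
      with hxf
    apply Finset.card_le_card_of_injOn (fun i => c (xf i))
    · intro i hi
      rw [Finset.mem_coe, hBset, Finset.mem_filter] at hi
      have hex := hi.2.2
      have hspec := hex.choose_spec
      have hxi : xf i = hex.choose := by rw [hxf]; exact dif_pos hex
      exact Finset.mem_image.mpr ⟨xf i, by
        rw [hN, SimpleGraph.mem_neighborFinset, hxi]; exact hspec.1, rfl⟩
    · intro i hi j hj hij
      rw [Finset.mem_coe, hBset, Finset.mem_filter] at hi hj
      obtain ⟨hiA, hexi⟩ := hi.2
      obtain ⟨hjA, hexj⟩ := hj.2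
      have hxi : xf i = hexi.choose := by rw [hxf]; exact dif_pos hexi
      have hxj : xf j = hexj.choose := by rw [hxf]; exact dif_pos hexj
      have hsi : G.Adj w (xf i) ∧ witnessSet G c (xf i) = {c w, i} := by
        rw [hxi]; exact hexi.choose_spec
      have hsj : G.Adj w (xf j) ∧ witnessSet G c (xf j) = {c w, j} := by
        rw [hxj]; exact hexj.choose_spec
      have hine : i ≠ c w := by
        intro h; exact hiA (h ▸ Finset.mem_insert_self _ _)
      have hij : c (xf i) = c (xf j) := hij
      by_cases hxx : xf i = xf j
      · have heq : ({c w, i} : Set (Fin (G.maxDegree + 6))) = {c w, j} := by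
          rw [← hsi.2, hxx, hsj.2]
        have hmem : i ∈ ({c w, j} : Set (Fin (G.maxDegree + 6))) := by
          rw [← heq]; exact Or.inr rfl
        rcases hmem with h | h
        · exact absurd h hine
        · exact h
      · exfalso
        have hnadj : ¬ G.Adj (xf i) (xf j) := fun h => hc h hij
        have hki := key i hiA (xf i) hsi.1 hsi.2
        have hkj := key j hjA (xf j) hsj.1 hsj.2
        rcases hclaw w v (xf i) (xf j) hw.symm hsi.1 hsj.1 (Ne.symm hki.1)
          (Ne.symm hkj.1) hxx with h | h | h
        · exact hki.2 h
        · exact hkj.2 h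
        · exact hnadj h
  -- Cardinality bound
  have hcard : Bad.card < G.maxDegree + 6 := by
    have h1 : Bad.card ≤ A.card + Bset.card :=
      le_trans (Finset.card_le_card hBsub) (Finset.card_union_le _ _)
    have h2 : A.card ≤ I.card + 1 := Finset.card_insert_le _ _
    have h3 : G.degree w ≤ G.maxDegree := G.degree_le_maxDegree w
    omega
  have hne : Bad ≠ Finset.univ := by
    intro h
    rw [h, Finset.card_univ, Fintype.card_fin] at hcard
    omega
  have hex : ∃ i, i ∉ Bad := by
    by_contra h
    push_neg at h
    exact hne (Finset.eq_univ_iff_forall.mpr h)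
  obtain ⟨i, hi⟩ := hex
  refine ⟨i, ?_, ?_, ?_⟩
  · intro h
    exact hi (Finset.mem_filter.mpr ⟨Finset.mem_univ _, Or.inl h⟩)
  · intro x hx hxe
    exact hi (Finset.mem_filter.mpr ⟨Finset.mem_univ _, Or.inr (Or.inl
      ⟨x, by rw [hN, SimpleGraph.mem_neighborFinset]; exact hx, hxe⟩)⟩)
  · intro x hx hxe
    exact hi (Finset.mem_filter.mpr ⟨Finset.mem_univ _,
      Or.inr (Or.inr ⟨x, hx, hxe⟩)⟩)


theorem stmt_19 {V : Type*} [Fintype V] [DecidableEq V] (G : SimpleGraph V)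
    [DecidableRel G.Adj] (hclaw : ClawFree G)
    (c : V → Fin (G.maxDegree + 6)) (hc : properColoring G c)
    (v : V) (hv : ∀ x, (x = v ∨ G.Adj v x) → ¬ isCritical G c x)
    (w : V) (hw : G.Adj v w) (hWsmall : (witnessSet G c w).ncard ≤ 4) :
    ∃ i : Fin (G.maxDegree + 6), isSafe G c w i := by
  exact stmt_19' G hclaw c hc v hv w hw hWsmall
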